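/- If r is a random vector in ℝ^n with i.i.d. Rademacher components, then for any symmetric matrix H, the variance of the Hutchinson estimator rᵀ H r equals 2(‖H‖_F² − Σᵢ Hᵢᵢ²), where ‖H‖_F is the Frobenius norm. -/

import Mathlib

open MeasureTheory Matrix ProbabilityTheory

/-- Rademacher distribution on `ℝ`: `±1` with probability `1/2` each. -/
noncomputable def rademacher : Measure ℝ :=
  ((1 : ENNReal) / 2) • Measure.dirac (1 : ℝ)
    + ((1 : ENNReal) / 2) • Measure.dirac (-1 : ℝ)

section HutchAux

variable {Ω : Type*} [MeasurableSpace Ω] {μ : Measure Ω} [IsProbabilityMeasure μ]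
  {n : ℕ} {r : Ω → Fin n → ℝ}

private lemma hutch_integrable_dirac {f : ℝ → ℝ} (hf : StronglyMeasurable f) (a : ℝ) :
    Integrable f (Measure.dirac a) := by
  refine ⟨hf.aestronglyMeasurable, ?_⟩
  rw [HasFiniteIntegral, lintegral_dirac]
  exact ENNReal.coe_lt_top

private lemma hutch_rad_moment (hmeas : ∀ i, Measurable fun ω => r ω i)
    (hdist : ∀ i, μ.map (fun ω => r ω i) = rademacher) (i : Fin n) (k : ℕ) :
    ∫ ω, (r ω i) ^ k ∂μ = if Even k then 1 else 0 := by
  have hpk : Measurable fun x : ℝ => x ^ k := measurable_id.pow_const k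
  have h1 : ∫ ω, (r ω i) ^ k ∂μ = ∫ x, x ^ k ∂(μ.map (fun ω => r ω i)) :=
    (integral_map (hmeas i).aemeasurable hpk.aestronglyMeasurable).symm
  rw [h1, hdist i, rademacher, integral_add_measure
      (((hutch_integrable_dirac hpk.stronglyMeasurable 1).smul_measure (by norm_num)))
      (((hutch_integrable_dirac hpk.stronglyMeasurable (-1)).smul_measure (by norm_num))),
    integral_smul_measure, integral_smul_measure, integral_dirac, integral_dirac]
  rcases Nat.even_or_odd k with hk | hk
  · rw [if_pos hk, hk.neg_one_pow]
    norm_num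
  · rw [if_neg (Nat.not_even_iff_odd.mpr hk), hk.neg_one_pow]
    norm_num

private lemma hutch_rad_ae (hmeas : ∀ i, Measurable fun ω => r ω i)
    (hdist : ∀ i, μ.map (fun ω => r ω i) = rademacher) :
    ∀ᵐ ω ∂μ, ∀ i, r ω i = 1 ∨ r ω i = -1 := by
  rw [ae_all_iff]
  intro i
  have hS : MeasurableSet ({1, -1}ᶜ : Set ℝ) := (measurableSet_singleton 1).union
    (measurableSet_singleton (-1)) |>.compl
  have h0 : μ ((fun ω => r ω i) ⁻¹' ({1, -1}ᶜ : Set ℝ)) = 0 := by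
    rw [← Measure.map_apply (hmeas i) hS, hdist i]
    simp [rademacher, Measure.dirac_apply' _ hS]
  rw [ae_iff]
  have hset : {ω | ¬(r ω i = 1 ∨ r ω i = -1)} = (fun ω => r ω i) ⁻¹' ({1, -1}ᶜ : Set ℝ) := by
    ext ω; simp [not_or]
  rw [hset]; exact h0

private lemma hutch_indep_integral_prod (g : Fin n → Ω → ℝ) (hg : ∀ i, Measurable (g i))
    (hind : iIndepFun g μ) (s : Finset (Fin n)) :
    ∫ ω, ∏ i ∈ s, g i ω ∂μ = ∏ i ∈ s, ∫ ω, g i ω ∂μ := by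
  classical
  induction s using Finset.induction_on with
  | empty => simp
  | @insert a s hi ih =>
    rw [Finset.prod_insert hi, ← ih]
    have hindep2 := (hind.indepFun_finsetProd_of_notMem hg hi).symm
    have hpm : (∏ j ∈ s, g j) = fun ω => ∏ j ∈ s, g j ω := by
      ext ω; simp
    have h := hindep2.integral_fun_mul_eq_mul_integral (hg a).aestronglyMeasurable
      (by rw [hpm]; exact (Finset.measurable_prod s (fun i _ => hg i)).aestronglyMeasurable)
    rw [hpm] at h
    calc ∫ ω, ∏ i ∈ insert a s, g i ω ∂μ
        = ∫ ω, g a ω * ∏ j ∈ s, g j ω ∂μ :=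
          integral_congr_ae (Filter.Eventually.of_forall fun ω => by
            simp only []
            rw [Finset.prod_insert hi])
      _ = (∫ ω, g a ω ∂μ) * ∫ ω, ∏ j ∈ s, g j ω ∂μ := h

private lemma hutch_rad_monomial (hmeas : ∀ i, Measurable fun ω => r ω i)
    (hindep : iIndepFun (fun i ω => r ω i) μ)
    (hdist : ∀ i, μ.map (fun ω => r ω i) = rademacher) (e : Fin n → ℕ) :
    ∫ ω, ∏ m, (r ω m) ^ (e m) ∂μ = if (∀ m, Even (e m)) then 1 else 0 := by
  have hg : ∀ i, Measurable (fun ω => (r ω i) ^ (e i)) := fun i => (hmeas i).pow_const _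
  have hind2 : iIndepFun (fun i ω => (r ω i) ^ (e i)) μ :=
    hindep.comp (fun i x => x ^ (e i)) (fun i => measurable_id.pow_const _)
  rw [hutch_indep_integral_prod _ hg hind2 Finset.univ]
  by_cases h : ∀ m, Even (e m)
  · rw [if_pos h]
    apply Finset.prod_eq_one
    intro m _
    rw [hutch_rad_moment hmeas hdist, if_pos (h m)]
  · rw [if_neg h]
    push_neg at h
    obtain ⟨m, hm⟩ := h
    apply Finset.prod_eq_zero (Finset.mem_univ m)
    rw [hutch_rad_moment hmeas hdist, if_neg hm]

private lemma hutch_rad_int_monomial (hmeas : ∀ i, Measurable fun ω => r ω i)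
    (hdist : ∀ i, μ.map (fun ω => r ω i) = rademacher) (e : Fin n → ℕ) :
    Integrable (fun ω => ∏ m, (r ω m) ^ (e m)) μ := by
  apply Integrable.mono' (integrable_const (1 : ℝ))
  · exact (Finset.measurable_prod Finset.univ
      (fun i _ => (hmeas i).pow_const (e i))).aestronglyMeasurable
  · filter_upwards [hutch_rad_ae hmeas hdist] with ω hω
    rw [Real.norm_eq_abs, Finset.abs_prod]
    calc ∏ m, |r ω m ^ (e m)| = ∏ m, (1:ℝ) := by
          apply Finset.prod_congr rfl
          intro m _
          rcases hω m with h | h <;> simp [h, abs_pow]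
      _ = 1 := by simp
      _ ≤ 1 := le_refl 1

/-- exponent vector of the monomial `v i * v j` -/
private def hutchE2 (i j : Fin n) : Fin n → ℕ := fun m =>
  (if i = m then 1 else 0) + (if j = m then 1 else 0)

/-- exponent vector of the monomial `v i * v j * v k * v l` -/
private def hutchE4 (i j k l : Fin n) : Fin n → ℕ := fun m =>
  (if i = m then 1 else 0) + (if j = m then 1 else 0)
    + (if k = m then 1 else 0) + (if l = m then 1 else 0)

private lemma hutch_prod_single (v : Fin n → ℝ) (i : Fin n) :
    ∏ m, v m ^ (if i = m then 1 else 0) = v i := by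
  simp [pow_ite, Finset.prod_ite_eq]

private lemma hutch_prod_e2 (v : Fin n → ℝ) (i j : Fin n) :
    ∏ m, v m ^ (hutchE2 i j m) = v i * v j := by
  simp only [hutchE2, pow_add, Finset.prod_mul_distrib, hutch_prod_single]

private lemma hutch_prod_e4 (v : Fin n → ℝ) (i j k l : Fin n) :
    ∏ m, v m ^ (hutchE4 i j k l m) = v i * v j * v k * v l := by
  simp only [hutchE4, pow_add, Finset.prod_mul_distrib, hutch_prod_single]

private lemma hutch_e2_even_iff (i j : Fin n) : (∀ m, Even (hutchE2 i j m)) ↔ i = j := by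
  constructor
  · intro h
    have hi := h i
    by_cases hij : i = j
    · exact hij
    · simp [hutchE2, hij, Ne.symm hij, Nat.even_iff] at hi
  · rintro rfl m
    simp only [hutchE2]; split_ifs <;> decide

private lemma hutch_e4_even_iff (i j k l : Fin n) :
    (∀ m, Even (hutchE4 i j k l m)) ↔ (i = j ∧ k = l) ∨ (i = k ∧ j = l) ∨ (i = l ∧ j = k) := by
  constructor
  · intro h
    have hi := h i; have hj := h j; have hk := h k; have hl := h l
    simp only [hutchE4] at hi hj hk hl
    by_cases h1 : i = j <;> by_cases h2 : i = k <;> by_cases h3 : i = l <;>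
      by_cases h4 : j = k <;> by_cases h5 : j = l <;> by_cases h6 : k = l <;>
      simp_all [Nat.even_iff, eq_comm]
  · rintro (⟨rfl, rfl⟩ | ⟨rfl, rfl⟩ | ⟨rfl, rfl⟩) m <;>
      · simp only [hutchE4]; split_ifs <;> decide

private lemma hutch_ite_split (i j k l : Fin n) :
    (if (i = j ∧ k = l) ∨ (i = k ∧ j = l) ∨ (i = l ∧ j = k) then (1:ℝ) else 0)
      = (if i = j ∧ k = l then (1:ℝ) else 0)
        + (if (i = k ∧ j = l) ∧ ¬ i = j then (1:ℝ) else 0)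
        + (if (i = l ∧ j = k) ∧ ¬ i = j then (1:ℝ) else 0) := by
  by_cases h1 : i = j <;> by_cases h2 : i = k <;> by_cases h3 : i = l <;>
    by_cases h4 : j = k <;> by_cases h5 : j = l <;> by_cases h6 : k = l <;>
    simp_all

private lemma hutch_sumS1 (H : Matrix (Fin n) (Fin n) ℝ) :
    ∑ i, ∑ k, ∑ j, ∑ l, (H i j * H k l) * (if i = j ∧ k = l then (1:ℝ) else 0)
      = (∑ i, H i i)^2 := by
  simp [mul_ite, ite_and, Finset.sum_ite_eq, sq, Finset.sum_mul_sum]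

private lemma hutch_sumS2 (H : Matrix (Fin n) (Fin n) ℝ) :
    ∑ i, ∑ k, ∑ j, ∑ l, (H i j * H k l) * (if (i = k ∧ j = l) ∧ ¬ i = j then (1:ℝ) else 0)
      = (∑ i, ∑ j, H i j ^ 2) - ∑ i, H i i ^ 2 := by
  have h : ∀ i k j l : Fin n, (H i j * H k l) * (if (i = k ∧ j = l) ∧ ¬ i = j then (1:ℝ) else 0)
      = if i = k then (if j = l then (H i j * H k l - if i = j then H i j * H k l else 0)
          else 0) else 0 := by
    intro i k j l; split_ifs <;> simp_all
  simp only [h, Finset.sum_ite_irrel, Finset.sum_ite_eq, Finset.mem_univ, if_true,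
    Finset.sum_const_zero]
  rw [← Finset.sum_sub_distrib]
  apply Finset.sum_congr rfl
  intro i _
  rw [Finset.sum_sub_distrib]
  simp [Finset.sum_ite_eq, sq]

private lemma hutch_sumS3 (H : Matrix (Fin n) (Fin n) ℝ) (hH : H.IsSymm) :
    ∑ i, ∑ k, ∑ j, ∑ l, (H i j * H k l) * (if (i = l ∧ j = k) ∧ ¬ i = j then (1:ℝ) else 0)
      = (∑ i, ∑ j, H i j ^ 2) - ∑ i, H i i ^ 2 := by
  have hsym : ∀ i j, H j i = H i j := fun i j => hH.apply i j
  have h : ∀ i k j l : Fin n, (H i j * H k l) * (if (i = l ∧ j = k) ∧ ¬ i = j then (1:ℝ) else 0)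
      = if j = k then (if i = l then (H i j * H i j - if i = j then H i j * H i j else 0)
          else 0) else 0 := by
    intro i k j l; split_ifs <;> simp_all
  simp only [h, Finset.sum_ite_irrel, Finset.sum_ite_eq, Finset.sum_ite_eq', Finset.mem_univ,
    if_true, Finset.sum_const_zero]
  rw [← Finset.sum_sub_distrib]
  apply Finset.sum_congr rfl
  intro i _
  rw [Finset.sum_sub_distrib]
  simp [Finset.sum_ite_eq, sq]

end HutchAux

/-- Variance of the Hutchinson estimator `rᵀ H r` with i.i.d. Rademacher
probe vectors: `Var[rᵀ H r] = 2(‖H‖_F² − Σᵢ Hᵢᵢ²)`. -/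
theorem hutchinson_variance
    {Ω : Type*} [MeasurableSpace Ω] (μ : Measure Ω) [IsProbabilityMeasure μ]
    {n : ℕ} (r : Ω → Fin n → ℝ)
    (hmeas : ∀ i, Measurable fun ω => r ω i)
    (hindep : iIndepFun (fun i ω => r ω i) μ)
    (hdist : ∀ i, μ.map (fun ω => r ω i) = rademacher)
    (H : Matrix (Fin n) (Fin n) ℝ) (hH : H.IsSymm) :
    variance (fun ω => (r ω) ⬝ᵥ H.mulVec (r ω)) μ
      = 2 * ((∑ i, ∑ j, H i j ^ 2) - ∑ i, H i i ^ 2) := by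
  classical
  have hXeq : (fun ω => (r ω) ⬝ᵥ H.mulVec (r ω))
      = fun ω => ∑ i, ∑ j, H i j * (r ω i * r ω j) := by
    funext ω
    simp only [dotProduct, mulVec, Finset.mul_sum]
    exact Finset.sum_congr rfl fun i _ => Finset.sum_congr rfl fun j _ => by ring
  rw [hXeq]
  set X : Ω → ℝ := fun ω => ∑ i, ∑ j, H i j * (r ω i * r ω j) with hXdef
  have hXmeas : Measurable X := Finset.measurable_sum _ fun i _ =>
    Finset.measurable_sum _ fun j _ => ((hmeas i).mul (hmeas j)).const_mul _
  have hbound : ∀ᵐ ω ∂μ, ‖X ω‖ ≤ ∑ i, ∑ j, |H i j| := by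
    filter_upwards [hutch_rad_ae hmeas hdist] with ω hω
    rw [Real.norm_eq_abs]
    calc |X ω| ≤ ∑ i, |∑ j, H i j * (r ω i * r ω j)| := Finset.abs_sum_le_sum_abs _ _
      _ ≤ ∑ i, ∑ j, |H i j * (r ω i * r ω j)| :=
          Finset.sum_le_sum fun i _ => Finset.abs_sum_le_sum_abs _ _
      _ ≤ ∑ i, ∑ j, |H i j| := by
          apply Finset.sum_le_sum; intro i _; apply Finset.sum_le_sum; intro j _
          rcases hω i with h1 | h1 <;> rcases hω j with h2 | h2 <;>
            rw [h1, h2] <;> simp [abs_mul]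
  have hmem : MemLp X 2 μ :=
    (memLp_top_of_bound hXmeas.aestronglyMeasurable _ hbound).mono_exponent le_top
  rw [variance_eq_sub hmem]
  -- the integrable building blocks
  have hint2 : ∀ i j : Fin n, Integrable (fun ω => H i j * (r ω i * r ω j)) μ := by
    intro i j
    have h := (hutch_rad_int_monomial hmeas hdist (hutchE2 i j)).const_mul (H i j)
    have he : (fun ω => H i j * ∏ m, (r ω m) ^ (hutchE2 i j m))
        = fun ω => H i j * (r ω i * r ω j) := by
      funext ω; rw [hutch_prod_e2]
    rwa [he] at h
  -- first moment
  have hterm : ∀ i j : Fin n,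
      ∫ ω, H i j * (r ω i * r ω j) ∂μ = if i = j then H i j else 0 := by
    intro i j
    rw [integral_const_mul]
    have he : (fun ω => r ω i * r ω j) = fun ω => ∏ m, (r ω m) ^ (hutchE2 i j m) := by
      funext ω; rw [hutch_prod_e2]
    rw [he, hutch_rad_monomial hmeas hindep hdist]
    simp only [hutch_e2_even_iff]
    split_ifs <;> ring
  have hEX : μ[X] = ∑ i, H i i := by
    rw [hXdef]
    rw [integral_finset_sum _ (fun i _ => integrable_finset_sum _ (fun j _ => hint2 i j))]
    calc ∑ i, ∫ ω, ∑ j, H i j * (r ω i * r ω j) ∂μ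
        = ∑ i, ∑ j, ∫ ω, H i j * (r ω i * r ω j) ∂μ :=
          Finset.sum_congr rfl fun i _ => integral_finset_sum _ (fun j _ => hint2 i j)
      _ = ∑ i, ∑ j, if i = j then H i j else 0 :=
          Finset.sum_congr rfl fun i _ => Finset.sum_congr rfl fun j _ => hterm i j
      _ = ∑ i, H i i := by simp [Finset.sum_ite_eq]
  -- second moment
  have hsq : ∀ ω, (X ω) ^ 2
      = ∑ i, ∑ k, ∑ j, ∑ l, (H i j * H k l) * ∏ m, (r ω m) ^ (hutchE4 i j k l m) := by
    intro ω
    rw [sq, hXdef]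
    simp only []
    rw [Finset.sum_mul_sum]
    apply Finset.sum_congr rfl; intro i _
    apply Finset.sum_congr rfl; intro k _
    rw [Finset.sum_mul_sum]
    apply Finset.sum_congr rfl; intro j _
    apply Finset.sum_congr rfl; intro l _
    rw [hutch_prod_e4]
    ring
  have hint4 : ∀ i k j l : Fin n,
      Integrable (fun ω => (H i j * H k l) * ∏ m, (r ω m) ^ (hutchE4 i j k l m)) μ :=
    fun i k j l => (hutch_rad_int_monomial hmeas hdist _).const_mul _
  have hterm4 : ∀ i k j l : Fin n,
      ∫ ω, (H i j * H k l) * ∏ m, (r ω m) ^ (hutchE4 i j k l m) ∂μ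
        = (H i j * H k l) *
            (if (i = j ∧ k = l) ∨ (i = k ∧ j = l) ∨ (i = l ∧ j = k) then (1:ℝ) else 0) := by
    intro i k j l
    rw [integral_const_mul, hutch_rad_monomial hmeas hindep hdist]
    simp only [hutch_e4_even_iff]
  have hEX2 : μ[X ^ 2] = (∑ i, H i i) ^ 2
      + 2 * ((∑ i, ∑ j, H i j ^ 2) - ∑ i, H i i ^ 2) := by
    have hXsq : (X ^ 2 : Ω → ℝ)
        = fun ω => ∑ i, ∑ k, ∑ j, ∑ l, (H i j * H k l) * ∏ m, (r ω m) ^ (hutchE4 i j k l m) := by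
      funext ω
      rw [Pi.pow_apply, hsq ω]
    rw [hXsq]
    rw [integral_finset_sum _ (fun i _ => integrable_finset_sum _ (fun k _ =>
      integrable_finset_sum _ (fun j _ => integrable_finset_sum _ (fun l _ =>
        hint4 i k j l))))]
    have hstep : ∀ i : Fin n, ∫ ω, ∑ k, ∑ j, ∑ l,
          (H i j * H k l) * ∏ m, (r ω m) ^ (hutchE4 i j k l m) ∂μ
        = ∑ k, ∑ j, ∑ l, (H i j * H k l) *
            (if (i = j ∧ k = l) ∨ (i = k ∧ j = l) ∨ (i = l ∧ j = k) then (1:ℝ) else 0) := by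
      intro i
      rw [integral_finset_sum _ (fun k _ => integrable_finset_sum _ (fun j _ =>
        integrable_finset_sum _ (fun l _ => hint4 i k j l)))]
      apply Finset.sum_congr rfl; intro k _
      rw [integral_finset_sum _ (fun j _ => integrable_finset_sum _ (fun l _ => hint4 i k j l))]
      apply Finset.sum_congr rfl; intro j _
      rw [integral_finset_sum _ (fun l _ => hint4 i k j l)]
      exact Finset.sum_congr rfl fun l _ => hterm4 i k j l
    calc ∑ i, ∫ ω, ∑ k, ∑ j, ∑ l,
            (H i j * H k l) * ∏ m, (r ω m) ^ (hutchE4 i j k l m) ∂μ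
        = ∑ i, ∑ k, ∑ j, ∑ l, (H i j * H k l) *
            (if (i = j ∧ k = l) ∨ (i = k ∧ j = l) ∨ (i = l ∧ j = k) then (1:ℝ) else 0) :=
          Finset.sum_congr rfl fun i _ => hstep i
      _ = (∑ i, ∑ k, ∑ j, ∑ l, (H i j * H k l) * (if i = j ∧ k = l then (1:ℝ) else 0))
          + ((∑ i, ∑ k, ∑ j, ∑ l, (H i j * H k l) *
              (if (i = k ∧ j = l) ∧ ¬ i = j then (1:ℝ) else 0))
          + (∑ i, ∑ k, ∑ j, ∑ l, (H i j * H k l) *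
              (if (i = l ∧ j = k) ∧ ¬ i = j then (1:ℝ) else 0))) := by
          simp only [hutch_ite_split, mul_add, Finset.sum_add_distrib]
          ring
      _ = (∑ i, H i i) ^ 2 + 2 * ((∑ i, ∑ j, H i j ^ 2) - ∑ i, H i i ^ 2) := by
          rw [hutch_sumS1, hutch_sumS2, hutch_sumS3 H hH]
          ring
  rw [hEX2, hEX]
  ring
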